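/- Let n be a positive integer, let p1 ∈ ℤ^n have all entries positive, let a2 ∈ ℝ^n, let k1 be an integer, and let M1 be a positive real number. Let B = {x ∈ ℝ^n : 0 ≤ x_j ≤ 1 for all j}. Let β'2 ≤ β2 be real numbers such that M1 > sup{a2·x : x ∈ B, p1·x ≤ k1} − β'2 and M1 > β2 − inf{a2·x : x ∈ B, p1·x ≥ k1+2} (whenever the respective sets are nonempty). Set a1 = M1·p1 + a2, β'1 = β'2 + (k1+1)·M1, and β1 = β2 + (k1+1)·M1. Then every x ∈ B with β'1 ≤ a1·x ≤ β1 satisfies k1 < p1·x < k1+2; in particular, the only integer value that p1·x can take on the LP relaxation of the cascade knapsack problem is k1+1. -/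
import Mathlib


open Finset

theorem ckp_root_branching (n : ℕ) (hn : 0 < n)
    (p1 : Fin n → ℤ) (hp1pos : ∀ i, 0 < p1 i)
    (a2 : Fin n → ℝ) (k1 : ℤ) (M1 : ℝ) (hM1 : 0 < M1)
    (B : Set (Fin n → ℝ)) (hB : B = {x | ∀ j, 0 ≤ x j ∧ x j ≤ 1})
    (β'2 β2 : ℝ) (hββ : β'2 ≤ β2)
    (hM1lo : {x ∈ B | ∑ i, (p1 i : ℝ) * x i ≤ (k1 : ℝ)}.Nonempty →
      sSup ((fun x => ∑ i, a2 i * x i) ''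
        {x ∈ B | ∑ i, (p1 i : ℝ) * x i ≤ (k1 : ℝ)}) - β'2 < M1)
    (hM1hi : {x ∈ B | (k1 : ℝ) + 2 ≤ ∑ i, (p1 i : ℝ) * x i}.Nonempty →
      β2 - sInf ((fun x => ∑ i, a2 i * x i) ''
        {x ∈ B | (k1 : ℝ) + 2 ≤ ∑ i, (p1 i : ℝ) * x i}) < M1)
    (a1 : Fin n → ℝ) (ha1 : a1 = fun i => M1 * (p1 i : ℝ) + a2 i)
    (β'1 β1 : ℝ)
    (hβ'1 : β'1 = β'2 + ((k1 : ℝ) + 1) * M1)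
    (hβ1 : β1 = β2 + ((k1 : ℝ) + 1) * M1) :
    ∀ x ∈ B, β'1 ≤ ∑ i, a1 i * x i → ∑ i, a1 i * x i ≤ β1 →
      ((k1 : ℝ) < ∑ i, (p1 i : ℝ) * x i ∧ ∑ i, (p1 i : ℝ) * x i < (k1 : ℝ) + 2) ∧
      ∀ m : ℤ, ∑ i, (p1 i : ℝ) * x i = (m : ℝ) → m = k1 + 1 := by
  intro x hxB hlo hhi
  have hxbox : ∀ j, 0 ≤ x j ∧ x j ≤ 1 := by rw [hB] at hxB; exact hxB
  set S := ∑ i, (p1 i : ℝ) * x i with hS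
  set A := ∑ i, a2 i * x i with hA
  have hsplit : ∑ i, a1 i * x i = M1 * S + A := by
    rw [ha1, hS, hA, Finset.mul_sum, ← Finset.sum_add_distrib]
    exact Finset.sum_congr rfl fun i _ => by ring
  rw [hsplit] at hlo hhi
  -- bounds on a2·y for y in the box
  have habs : ∀ y : Fin n → ℝ, (∀ j, 0 ≤ y j ∧ y j ≤ 1) →
      -(∑ i, |a2 i|) ≤ ∑ i, a2 i * y i ∧ ∑ i, a2 i * y i ≤ ∑ i, |a2 i| := by
    intro y hy
    constructor
    · rw [← Finset.sum_neg_distrib]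
      refine Finset.sum_le_sum fun i _ => ?_
      nlinarith [le_abs_self (a2 i), neg_abs_le (a2 i), (hy i).1, (hy i).2,
        abs_nonneg (a2 i)]
    · refine Finset.sum_le_sum fun i _ => ?_
      nlinarith [le_abs_self (a2 i), neg_abs_le (a2 i), (hy i).1, (hy i).2,
        abs_nonneg (a2 i)]
  have hmain : (k1 : ℝ) < S ∧ S < (k1 : ℝ) + 2 := by
    constructor
    · by_contra h
      push_neg at h
      have hxmem : x ∈ {x ∈ B | ∑ i, (p1 i : ℝ) * x i ≤ (k1 : ℝ)} := ⟨hxB, h⟩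
      have hne : {x ∈ B | ∑ i, (p1 i : ℝ) * x i ≤ (k1 : ℝ)}.Nonempty := ⟨x, hxmem⟩
      have hbdd : BddAbove ((fun x => ∑ i, a2 i * x i) ''
          {x ∈ B | ∑ i, (p1 i : ℝ) * x i ≤ (k1 : ℝ)}) := by
        refine ⟨∑ i, |a2 i|, ?_⟩
        rintro _ ⟨y, hy, rfl⟩
        have hybox : ∀ j, 0 ≤ y j ∧ y j ≤ 1 := by
          have := hy.1; rw [hB] at this; exact this
        exact (habs y hybox).2
      have hle : A ≤ sSup ((fun x => ∑ i, a2 i * x i) ''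
          {x ∈ B | ∑ i, (p1 i : ℝ) * x i ≤ (k1 : ℝ)}) :=
        le_csSup hbdd ⟨x, hxmem, rfl⟩
      have := hM1lo hne
      -- A ≥ β'1 - M1 * S ≥ β'2 + (k1+1)M1 - M1 k1 = β'2 + M1
      rw [hβ'1] at hlo
      nlinarith
    · by_contra h
      push_neg at h
      have hxmem : x ∈ {x ∈ B | (k1 : ℝ) + 2 ≤ ∑ i, (p1 i : ℝ) * x i} := ⟨hxB, h⟩
      have hne : {x ∈ B | (k1 : ℝ) + 2 ≤ ∑ i, (p1 i : ℝ) * x i}.Nonempty := ⟨x, hxmem⟩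
      have hbdd : BddBelow ((fun x => ∑ i, a2 i * x i) ''
          {x ∈ B | (k1 : ℝ) + 2 ≤ ∑ i, (p1 i : ℝ) * x i}) := by
        refine ⟨-(∑ i, |a2 i|), ?_⟩
        rintro _ ⟨y, hy, rfl⟩
        have hybox : ∀ j, 0 ≤ y j ∧ y j ≤ 1 := by
          have := hy.1; rw [hB] at this; exact this
        exact (habs y hybox).1
      have hge : sInf ((fun x => ∑ i, a2 i * x i) ''
          {x ∈ B | (k1 : ℝ) + 2 ≤ ∑ i, (p1 i : ℝ) * x i}) ≤ A :=
        csInf_le hbdd ⟨x, hxmem, rfl⟩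
      have := hM1hi hne
      rw [hβ1] at hhi
      nlinarith
  refine ⟨hmain, fun m hm => ?_⟩
  rw [hm] at hmain
  have h1 : (k1 : ℝ) < (m : ℝ) := hmain.1
  have h2 : (m : ℝ) < (k1 : ℝ) + 2 := hmain.2
  have h1' : k1 < m := by exact_mod_cast h1
  have h2' : m < k1 + 2 := by exact_mod_cast h2
  omega
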